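/- Let h : (0,∞) → ℝ be measurable and bounded with ∫₀^∞ h(y)²/y dy < ∞. Define φ(x,t) = ∫₀^∞ exp(−x·y − 2t/y)·h(y)² dy for x, t > 0. Then φ is well-defined, the mixed partial derivative ∂²φ/∂x∂t exists at every (x,t) with x, t > 0, and it satisfies ∂²φ/∂x∂t = 2·φ(x,t). -/

import Mathlib

open MeasureTheory Set Metric

/-- The scattering function `φ(x,t) = ∫₀^∞ exp(−xy − 2t/y)·h(y)² dy` of the linear
system associated with the Howland kernel. -/
noncomputable def phiSG (h : ℝ → ℝ) (x t : ℝ) : ℝ :=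
  ∫ y in Set.Ioi (0 : ℝ), Real.exp (-(x * y) - 2 * t / y) * (h y) ^ 2

/-- For bounded measurable `h : (0,∞) → ℝ` with `∫₀^∞ h(y)²/y dy < ∞`, the scattering
function `φ(x,t) = ∫₀^∞ exp(−xy − 2t/y)·h(y)² dy` is well-defined for `x, t > 0`, its
mixed partial derivative `∂²φ/∂x∂t` exists, and `∂²φ/∂x∂t = 2φ`: the linear counterpart
of the sinh-Gordon equation. -/
-- u*exp(-u) ≤ 1
lemma aux_ue (u : ℝ) (hu : 0 ≤ u) : u * Real.exp (-u) ≤ 1 := by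
  rw [Real.exp_neg, mul_inv_le_iff₀ (Real.exp_pos u), one_mul]
  linarith [Real.add_one_le_exp u]

-- (2/y) * exp(-2s/y) ≤ 2/s  for y>0, s>0
lemma aux_bd (s y : ℝ) (hs : 0 < s) (hy : 0 < y) :
    2 / y * Real.exp (-(2 * s / y)) ≤ 2 / s := by
  have hu : 0 ≤ s / y := le_of_lt (div_pos hs hy)
  have h1 : Real.exp (-(2 * s / y)) ≤ Real.exp (-(s / y)) := by
    apply Real.exp_le_exp.mpr; rw [neg_le_neg_iff]
    rw [mul_div_assoc]; nlinarith [div_pos hs hy]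
  have h2 : (s / y) * Real.exp (-(s / y)) ≤ 1 := aux_ue _ hu
  have : 2 / y * Real.exp (-(2 * s / y)) = (2 / s) * ((s / y) * Real.exp (-(2 * s / y))) := by
    field_simp
  rw [this]
  have : (s / y) * Real.exp (-(2 * s / y)) ≤ 1 :=
    le_trans (by nlinarith [Real.exp_pos (-(2*s/y)), Real.exp_pos (-(s/y))]) h2
  nlinarith [div_pos (by norm_num : (0:ℝ)<2) hs]

lemma aux_meas (h : ℝ → ℝ) (hm : Measurable h) (x t : ℝ) :
    AEStronglyMeasurable (fun y : ℝ => Real.exp (-(x * y) - 2 * t / y) * (h y) ^ 2)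
      (volume.restrict (Ioi 0)) := by
  apply Measurable.aestronglyMeasurable
  exact (Real.measurable_exp.comp ((measurable_const.mul measurable_id).neg.sub
    (measurable_const.div measurable_id))).mul ((hm.pow_const 2))

lemma aux_meas2 (h : ℝ → ℝ) (hm : Measurable h) (x t : ℝ) :
    AEStronglyMeasurable (fun y : ℝ => (-2 / y) * (Real.exp (-(x * y) - 2 * t / y) * (h y) ^ 2))
      (volume.restrict (Ioi 0)) := by
  exact (measurable_const.div measurable_id).aestronglyMeasurable.mul (aux_meas h hm x t)

lemma key_int (h : ℝ → ℝ) (hm : Measurable h) (K : ℝ) (hK : ∀ y : ℝ, 0 < y → |h y| ≤ K)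
    {x t : ℝ} (hx : 0 < x) (ht : 0 ≤ t) :
    IntegrableOn (fun y : ℝ => Real.exp (-(x * y) - 2 * t / y) * (h y) ^ 2) (Ioi 0) := by
  apply Integrable.mono' (g := fun y => K ^ 2 * Real.exp (-x * y))
    ((exp_neg_integrableOn_Ioi 0 hx).const_mul _) (aux_meas h hm x t)
  filter_upwards [ae_restrict_mem measurableSet_Ioi] with y hy
  have hy : (0:ℝ) < y := hy
  have h1 : Real.exp (-(x * y) - 2 * t / y) ≤ Real.exp (-x * y) := by
    apply Real.exp_le_exp.mpr
    have : 0 ≤ 2 * t / y := div_nonneg (by linarith) hy.le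
    linarith
  have h2 : (h y) ^ 2 ≤ K ^ 2 := by
    have := hK y hy; nlinarith [abs_nonneg (h y), neg_abs_le (h y), le_abs_self (h y)]
  have hE := Real.exp_pos (-(x * y) - 2 * t / y)
  rw [Real.norm_eq_abs, abs_of_nonneg (by positivity)]
  nlinarith [Real.exp_pos (-x * y), sq_nonneg (h y)]

lemma key_int2 (h : ℝ → ℝ) (hm : Measurable h) (K : ℝ) (hK : ∀ y : ℝ, 0 < y → |h y| ≤ K)
    {x t : ℝ} (hx : 0 < x) (ht : 0 < t) :
    IntegrableOn (fun y : ℝ => (-2 / y) * (Real.exp (-(x * y) - 2 * t / y) * (h y) ^ 2)) (Ioi 0) := by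
  apply Integrable.mono' (g := fun y => (2 / t * K ^ 2) * Real.exp (-x * y))
    ((exp_neg_integrableOn_Ioi 0 hx).const_mul _) (aux_meas2 h hm x t)
  filter_upwards [ae_restrict_mem measurableSet_Ioi] with y hy
  have hy : (0:ℝ) < y := hy
  have h2 : (h y) ^ 2 ≤ K ^ 2 := by
    have := hK y hy; nlinarith [abs_nonneg (h y), neg_abs_le (h y), le_abs_self (h y)]
  have hsplit : Real.exp (-(x * y) - 2 * t / y) = Real.exp (-x * y) * Real.exp (-(2 * t / y)) := by
    rw [← Real.exp_add]; ring_nf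
  have hb := aux_bd t y ht hy
  rw [Real.norm_eq_abs, abs_mul, abs_of_nonneg (by positivity : (0:ℝ) ≤ Real.exp _ * _),
    abs_div, abs_of_pos hy]
  have : |(-2 : ℝ)| = 2 := by norm_num
  rw [this, hsplit]
  have hEx := Real.exp_pos (-x * y)
  have hEt := Real.exp_pos (-(2 * t / y))
  have hKn : (0:ℝ) ≤ K ^ 2 := le_trans (sq_nonneg (h y)) h2
  have key : 2 / y * Real.exp (-(2 * t / y)) * (h y ^ 2) ≤ 2 / t * K ^ 2 :=
    mul_le_mul hb h2 (sq_nonneg _) (by positivity)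
  nlinarith [mul_le_mul_of_nonneg_left key hEx.le]

lemma hasDerivAt_t (x y c t : ℝ) (hy : 0 < y) :
    HasDerivAt (fun t' : ℝ => Real.exp (-(x * y) - 2 * t' / y) * c)
      ((-2 / y) * (Real.exp (-(x * y) - 2 * t / y) * c)) t := by
  have h0 : HasDerivAt (fun t' : ℝ => -(x * y) - 2 * t' / y) (-(2 / y)) t := by
    have h1 := ((hasDerivAt_id t).const_mul (2 / y)).const_sub (-(x * y))
    have he : (fun t' : ℝ => -(x * y) - 2 * t' / y) = fun t' => -(x * y) - 2 / y * t' := by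
      funext t'; ring
    rw [he]; simpa using h1
  have h2 := (h0.exp).mul_const c
  refine h2.congr_deriv ?_; ring

lemma hasDerivAt_x (t y c x : ℝ) (hy : 0 < y) :
    HasDerivAt (fun x' : ℝ => (-2 / y) * (Real.exp (-(x' * y) - 2 * t / y) * c))
      (2 * (Real.exp (-(x * y) - 2 * t / y) * c)) x := by
  have h0 : HasDerivAt (fun x' : ℝ => -(x' * y) - 2 * t / y) (-y) x := by
    simpa using (((hasDerivAt_id x).mul_const y).neg).sub_const (2 * t / y)
  have h2 := ((h0.exp).mul_const c).const_mul (-2 / y)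
  refine h2.congr_deriv ?_
  field_simp

theorem sinh_gordon_linear_counterpart
    (h : ℝ → ℝ) (hmeas : Measurable h) (hbdd : ∃ K : ℝ, ∀ y : ℝ, 0 < y → |h y| ≤ K)
    (hint : IntegrableOn (fun y : ℝ => (h y) ^ 2 / y) (Set.Ioi (0 : ℝ))) :
    (∀ x t : ℝ, 0 < x → 0 < t →
      IntegrableOn (fun y : ℝ => Real.exp (-(x * y) - 2 * t / y) * (h y) ^ 2)
        (Set.Ioi (0 : ℝ))) ∧
    ∃ φt : ℝ → ℝ → ℝ,
      (∀ x t : ℝ, 0 < x → 0 < t →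
        HasDerivAt (fun t' : ℝ => phiSG h x t') (φt x t) t) ∧
      (∀ x t : ℝ, 0 < x → 0 < t →
        HasDerivAt (fun x' : ℝ => φt x' t) (2 * phiSG h x t) x) := by
  obtain ⟨K, hK⟩ := hbdd
  refine ⟨fun x t hx ht => key_int h hmeas K hK hx ht.le,
    fun x t => ∫ y in Ioi 0, (-2 / y) * (Real.exp (-(x * y) - 2 * t / y) * (h y) ^ 2),
    ?_, ?_⟩
  · intro x t hx ht
    have main := hasDerivAt_integral_of_dominated_loc_of_deriv_le
      (F := fun t' y => Real.exp (-(x * y) - 2 * t' / y) * (h y) ^ 2)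
      (F' := fun t' y => (-2 / y) * (Real.exp (-(x * y) - 2 * t' / y) * (h y) ^ 2))
      (μ := volume.restrict (Ioi 0)) (x₀ := t)
      (bound := fun y => (4 / t * K ^ 2) * Real.exp (-x * y))
      (ball_mem_nhds t (half_pos ht))
      (Filter.Eventually.of_forall fun t' => aux_meas h hmeas x t')
      (key_int h hmeas K hK hx ht.le)
      (aux_meas2 h hmeas x t)
      ?_ ((exp_neg_integrableOn_Ioi 0 hx).const_mul _) ?_
    · exact main.2
    · filter_upwards [ae_restrict_mem measurableSet_Ioi] with y hy
      intro t' ht'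
      have hy : (0:ℝ) < y := hy
      rw [mem_ball, Real.dist_eq, abs_lt] at ht'
      have ht2 : t / 2 < t' := by linarith
      have h2 : (h y) ^ 2 ≤ K ^ 2 := by
        have := hK y hy; nlinarith [abs_nonneg (h y), neg_abs_le (h y), le_abs_self (h y)]
      have hsplit : Real.exp (-(x * y) - 2 * t' / y)
          = Real.exp (-x * y) * Real.exp (-(2 * t' / y)) := by
        rw [← Real.exp_add]; ring_nf
      have hmono : Real.exp (-(2 * t' / y)) ≤ Real.exp (-(2 * (t / 2) / y)) := by
        apply Real.exp_le_exp.mpr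
        have : 2 * (t / 2) / y ≤ 2 * t' / y := by
          gcongr
        linarith
      have hb := aux_bd (t / 2) y (half_pos ht) hy
      have hb' : 2 / y * Real.exp (-(2 * t' / y)) ≤ 4 / t := by
        have h4 : (2:ℝ) / (t / 2) = 4 / t := by field_simp; ring
        have := mul_le_mul_of_nonneg_left hmono (by positivity : (0:ℝ) ≤ 2 / y)
        linarith [h4 ▸ hb]
      rw [Real.norm_eq_abs, abs_mul,
        abs_of_nonneg (by positivity : (0:ℝ) ≤ Real.exp (-(x * y) - 2 * t' / y) * (h y) ^ 2),
        abs_div, abs_of_pos hy]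
      have habs : |(-2 : ℝ)| = 2 := by norm_num
      rw [habs, hsplit]
      have hEx := Real.exp_pos (-x * y)
      have key : 2 / y * Real.exp (-(2 * t' / y)) * (h y ^ 2) ≤ 4 / t * K ^ 2 :=
        mul_le_mul hb' h2 (sq_nonneg _) (by positivity)
      nlinarith [mul_le_mul_of_nonneg_left key hEx.le]
    · filter_upwards [ae_restrict_mem measurableSet_Ioi] with y hy
      intro t' _
      exact hasDerivAt_t x y ((h y) ^ 2) t' hy
  · intro x t hx ht
    have main := hasDerivAt_integral_of_dominated_loc_of_deriv_le
      (F := fun x' y => (-2 / y) * (Real.exp (-(x' * y) - 2 * t / y) * (h y) ^ 2))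
      (F' := fun x' y => 2 * (Real.exp (-(x' * y) - 2 * t / y) * (h y) ^ 2))
      (μ := volume.restrict (Ioi 0)) (x₀ := x)
      (bound := fun y => (2 * K ^ 2) * Real.exp (-(x / 2) * y))
      (ball_mem_nhds x (half_pos hx))
      (Filter.Eventually.of_forall fun x' => aux_meas2 h hmeas x' t)
      (key_int2 h hmeas K hK hx ht)
      (((aux_meas h hmeas x t).const_mul 2))
      ?_ ((exp_neg_integrableOn_Ioi 0 (half_pos hx)).const_mul _) ?_
    · have := main.2
      rw [MeasureTheory.integral_const_mul] at this
      exact this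
    · filter_upwards [ae_restrict_mem measurableSet_Ioi] with y hy
      intro x' hx'
      have hy : (0:ℝ) < y := hy
      rw [mem_ball, Real.dist_eq, abs_lt] at hx'
      have hx2 : x / 2 < x' := by linarith
      have h2 : (h y) ^ 2 ≤ K ^ 2 := by
        have := hK y hy; nlinarith [abs_nonneg (h y), neg_abs_le (h y), le_abs_self (h y)]
      have hE : Real.exp (-(x' * y) - 2 * t / y) ≤ Real.exp (-(x / 2) * y) := by
        apply Real.exp_le_exp.mpr
        have h1 : 0 ≤ 2 * t / y := by positivity
        nlinarith
      rw [Real.norm_eq_abs,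
        abs_of_nonneg (by positivity : (0:ℝ) ≤ 2 * (Real.exp (-(x' * y) - 2 * t / y) * (h y) ^ 2))]
      have hEp := Real.exp_pos (-(x' * y) - 2 * t / y)
      have hEq := Real.exp_pos (-(x / 2) * y)
      nlinarith [sq_nonneg (h y), mul_le_mul hE h2 (sq_nonneg _) hEq.le]
    · filter_upwards [ae_restrict_mem measurableSet_Ioi] with y hy
      intro x' _
      exact hasDerivAt_x t y ((h y) ^ 2) x' hy
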